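/- For the standard cube I^n with the Cartan–Serre coproduct, the k-fold iterated coproduct of the top face I^n equals the signed sum over all sequences of faces F_1|...|F_k satisfying min F_1 = 0^n, max F_k = 1^n, and max F_i = min F_{i+1} for 1 ≤ i ≤ k−1; the sign of each term is the sign of the permutation of {1,...,n} obtained by concatenating, in order, the lists of positions at which I appears in F_1, F_2, ..., F_k. -/

import Mathlib

/-- The three possible entries of a face of the cube `Iⁿ`: `0`, `1`, or the free
coordinate `I`. A face of `Iⁿ` is a length-`n` list in `{0, 1, I}`. -/
inductive CubeSym : Type
  | zero : CubeSym
  | one : CubeSym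
  | seg : CubeSym
deriving DecidableEq

/-- The degree of a face: the number of `I`'s. -/
def faceDeg (F : List CubeSym) : ℕ := F.count CubeSym.seg

/-- `min F`: replace every `I` by `0`. -/
def faceMin (F : List CubeSym) : List CubeSym :=
  F.map fun s => if s = CubeSym.seg then CubeSym.zero else s

/-- `max F`: replace every `I` by `1`. -/
def faceMax (F : List CubeSym) : List CubeSym :=
  F.map fun s => if s = CubeSym.seg then CubeSym.one else s

/-- The (ordered) list of positions at which `I` occurs in a face, starting at index `i`. -/
def segPositions : List CubeSym → ℕ → List ℕ
  | [], _ => []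
  | (a :: t), i =>
      if a = CubeSym.seg then i :: segPositions t (i + 1) else segPositions t (i + 1)

/-- The number of inversions of a list of (distinct) naturals; the sign of the associated
permutation is `(−1)` to this count. -/
def invCount : List ℕ → ℕ
  | [] => 0
  | a :: t => t.countP (fun b => decide (b < a)) + invCount t

/-- The Cartan–Serre coproduct on cubical chains of the cube, on faces, defined on the
`1`-cube by `Δ0 = 0⊗0`, `Δ1 = 1⊗1`, `ΔI = 0⊗I + I⊗1` and extended to longer strings by
the Koszul sign rule. -/
noncomputable def csCop : List CubeSym → ((List CubeSym × List CubeSym) →₀ ℤ)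
  | [] => Finsupp.single ([], []) 1
  | (CubeSym.zero :: t) =>
      (csCop t).sum fun p c => Finsupp.single (CubeSym.zero :: p.1, CubeSym.zero :: p.2) c
  | (CubeSym.one :: t) =>
      (csCop t).sum fun p c => Finsupp.single (CubeSym.one :: p.1, CubeSym.one :: p.2) c
  | (CubeSym.seg :: t) =>
      (csCop t).sum fun p c =>
        ((-1 : ℤ) ^ faceDeg p.1 * c) •
            Finsupp.single (CubeSym.zero :: p.1, CubeSym.seg :: p.2) (1 : ℤ) +
          c • Finsupp.single (CubeSym.seg :: p.1, CubeSym.one :: p.2) (1 : ℤ)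

/-- The `(k+1)`-fold iterated coproduct (so `csIter 0 F = F`), landing in the free abelian
group on `(k+1)`-tuples of faces; iteration on the last tensor factor (the coproduct is
coassociative, so any order of iteration agrees). -/
noncomputable def csIter : ℕ → List CubeSym → (List (List CubeSym) →₀ ℤ)
  | 0, F => Finsupp.single [F] 1
  | (k + 1), F =>
      (csCop F).sum fun p c =>
        c • ((csIter k p.2).sum fun L cc => Finsupp.single (p.1 :: L) cc)

namespace CS
open CubeSym List

@[simp] lemma faceMin_nil : faceMin [] = [] := rfl
@[simp] lemma faceMin_cons (a : CubeSym) (t : List CubeSym) :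
    faceMin (a :: t) = (if a = seg then zero else a) :: faceMin t := rfl
@[simp] lemma faceMax_nil : faceMax [] = [] := rfl
@[simp] lemma faceMax_cons (a : CubeSym) (t : List CubeSym) :
    faceMax (a :: t) = (if a = seg then one else a) :: faceMax t := rfl

@[simp] lemma faceMin_length (F : List CubeSym) : (faceMin F).length = F.length :=
  List.length_map _
@[simp] lemma faceMax_length (F : List CubeSym) : (faceMax F).length = F.length :=
  List.length_map _

def pos (F : List CubeSym) : List ℕ := segPositions F 0

lemma segPositions_shift (F : List CubeSym) : ∀ i, segPositions F i = (segPositions F 0).map (· + i) := by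
  induction F with
  | nil => intro i; rfl
  | cons a t ih =>
    intro i
    simp only [segPositions]
    rcases eq_or_ne a seg with h | h
    · simp [h, ih (i+1), ih 1, Function.comp, add_assoc, add_comm 1 i]
    · simp [h, ih (i+1), ih 1, Function.comp, add_assoc, add_comm 1 i]

lemma pos_cons_zero (t : List CubeSym) : pos (zero :: t) = (pos t).map (· + 1) := by
  simp [pos, segPositions, segPositions_shift t 1]
lemma pos_cons_one (t : List CubeSym) : pos (one :: t) = (pos t).map (· + 1) := by
  simp [pos, segPositions, segPositions_shift t 1]
lemma pos_cons_seg (t : List CubeSym) : pos (seg :: t) = 0 :: (pos t).map (· + 1) := by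
  simp [pos, segPositions, segPositions_shift t 1]

lemma faceDeg_eq_length_pos (F : List CubeSym) : faceDeg F = (pos F).length := by
  induction F with
  | nil => rfl
  | cons a t ih =>
    cases a <;> simp [faceDeg, pos_cons_zero, pos_cons_one, pos_cons_seg, List.count_cons,
      ← ih]

@[simp] lemma invCount_nil : invCount [] = 0 := rfl
@[simp] lemma invCount_cons (a : ℕ) (t : List ℕ) :
    invCount (a :: t) = t.countP (fun b => decide (b < a)) + invCount t := rfl

lemma invCount_map_succ (l : List ℕ) : invCount (l.map (· + 1)) = invCount l := by
  induction l with
  | nil => rfl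
  | cons a t ih =>
    simp only [List.map_cons, invCount_cons, ih, List.countP_map]
    congr 1
    apply List.countP_congr
    intro b _
    simp [Function.comp, Nat.add_lt_add_iff_right]

end CS
namespace CS
open CubeSym List

/-- cross inversions: pairs (a ∈ X, b ∈ Y) with b < a. -/
def cross (X Y : List ℕ) : ℕ := (X.map fun a => Y.countP (fun b => decide (b < a))).sum

@[simp] lemma cross_nil (Y : List ℕ) : cross [] Y = 0 := rfl
lemma cross_cons (a : ℕ) (X Y : List ℕ) :
    cross (a :: X) Y = Y.countP (fun b => decide (b < a)) + cross X Y := by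
  simp [cross]

lemma invCount_append (X Y : List ℕ) :
    invCount (X ++ Y) = invCount X + invCount Y + cross X Y := by
  induction X with
  | nil => simp
  | cons a X ih => simp [List.countP_append, cross_cons, ih]; omega

lemma cross_perm (X : List ℕ) {Y Y' : List ℕ} (h : Y.Perm Y') : cross X Y = cross X Y' := by
  induction X with
  | nil => rfl
  | cons a X ih => simp [cross_cons, ih, h.countP_eq]

lemma invCount_eq_zero_of_pairwise {l : List ℕ} (h : l.Pairwise (· < ·)) : invCount l = 0 := by
  induction l with
  | nil => rfl
  | cons a t ih =>
    rcases List.pairwise_cons.1 h with ⟨h1, h2⟩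
    simp only [invCount_cons, ih h2, add_zero]
    rw [List.countP_eq_zero.2]
    intro b hb
    simp [Nat.not_lt.2 (le_of_lt (h1 b hb))]

lemma segPositions_pairwise (F : List CubeSym) : ∀ i,
    (segPositions F i).Pairwise (· < ·) ∧ ∀ p ∈ segPositions F i, i ≤ p := by
  induction F with
  | nil => intro i; simp [segPositions]
  | cons a t ih =>
    intro i
    rcases ih (i+1) with ⟨h1, h2⟩
    by_cases h : a = seg <;> simp only [segPositions, h, if_true, if_false, reduceIte]
    · constructor
      · exact List.pairwise_cons.2 ⟨fun p hp => lt_of_lt_of_le (Nat.lt_succ_self i) (h2 p hp), h1⟩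
      · intro p hp
        rcases List.mem_cons.1 hp with rfl | hp
        · exact le_refl _
        · exact le_of_lt (lt_of_lt_of_le (Nat.lt_succ_self i) (h2 p hp))
    · exact ⟨h1, fun p hp => le_of_lt (lt_of_lt_of_le (Nat.lt_succ_self i) (h2 p hp))⟩

lemma pos_pairwise (F : List CubeSym) : (pos F).Pairwise (· < ·) :=
  (segPositions_pairwise F 0).1

end CS
namespace CS
open CubeSym List

/-- order on vertex symbols: `0 ≤ 0`, `1 ≤ 1`, `0 ≤ 1`. -/
def vle (a b : CubeSym) : Prop :=
  (a = zero ∧ b = zero) ∨ (a = one ∧ b = one) ∨ (a = zero ∧ b = one)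

def lle (m M : List CubeSym) : Prop := List.Forall₂ vle m M

def combine (a b : CubeSym) : CubeSym := if a = b then a else seg

def recon (m M : List CubeSym) : List CubeSym := List.zipWith combine m M

@[simp] lemma recon_nil : recon [] [] = [] := rfl
@[simp] lemma recon_cons (a b : CubeSym) (m M : List CubeSym) :
    recon (a :: m) (b :: M) = combine a b :: recon m M := rfl
@[simp] lemma combine_zz : combine zero zero = zero := rfl
@[simp] lemma combine_oo : combine one one = one := rfl
@[simp] lemma combine_zo : combine zero one = seg := rfl

@[simp] lemma combine_min_max (s : CubeSym) :
    combine (if s = seg then zero else s) (if s = seg then one else s) = s := by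
  cases s <;> rfl

lemma recon_min_max (F : List CubeSym) : recon (faceMin F) (faceMax F) = F := by
  induction F with
  | nil => rfl
  | cons a t ih =>
    simp only [faceMin_cons, faceMax_cons, recon_cons, combine_min_max]
    exact congrArg (a :: ·) ih

lemma minmax_ext {G H : List CubeSym} (h1 : faceMin G = faceMin H)
    (h2 : faceMax G = faceMax H) : G = H := by
  rw [← recon_min_max G, h1, h2, recon_min_max]

lemma lle_min_max (F : List CubeSym) : lle (faceMin F) (faceMax F) := by
  induction F with
  | nil => exact List.Forall₂.nil
  | cons a t ih =>
    refine List.Forall₂.cons ?_ ih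
    cases a <;> simp [vle]

lemma vle_trans {a b c : CubeSym} (h1 : vle a b) (h2 : vle b c) : vle a c := by
  rcases h1 with ⟨rfl, rfl⟩ | ⟨rfl, rfl⟩ | ⟨rfl, rfl⟩ <;>
    rcases h2 with ⟨h, rfl⟩ | ⟨h, rfl⟩ | ⟨h, rfl⟩ <;> simp_all [vle]

lemma lle_trans : ∀ {m x M : List CubeSym}, lle m x → lle x M → lle m M := by
  intro m x M h1
  induction h1 generalizing M with
  | nil => intro h2; cases h2; exact List.Forall₂.nil
  | cons hab h1' ih =>
    intro h2
    cases h2 with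
    | cons hbc h2' => exact List.Forall₂.cons (vle_trans hab hbc) (ih h2')

lemma faceMin_recon : ∀ {m M : List CubeSym}, lle m M → faceMin (recon m M) = m := by
  intro m M h
  induction h with
  | nil => rfl
  | cons hab h ih =>
    rcases hab with ⟨rfl, rfl⟩ | ⟨rfl, rfl⟩ | ⟨rfl, rfl⟩ <;>
      · simp only [recon_cons, combine_zz, combine_oo, combine_zo, faceMin_cons, ih]
        rfl

lemma faceMax_recon : ∀ {m M : List CubeSym}, lle m M → faceMax (recon m M) = M := by
  intro m M h
  induction h with
  | nil => rfl
  | cons hab h ih =>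
    rcases hab with ⟨rfl, rfl⟩ | ⟨rfl, rfl⟩ | ⟨rfl, rfl⟩ <;>
      · simp only [recon_cons, combine_zz, combine_oo, combine_zo, faceMax_cons, ih]
        rfl

lemma pos_recon_append : ∀ {m x M : List CubeSym}, lle m x → lle x M →
    (pos (recon m x) ++ pos (recon x M)).Perm (pos (recon m M)) := by
  intro m x M h1
  induction h1 generalizing M with
  | nil =>
    intro h2; cases h2; simp [pos, segPositions]
  | @cons a b m' x' hab h1' ih =>
    intro h2
    cases h2 with
    | @cons _ c _ M' hbc h2' =>
      have IH := ih h2'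
      rcases hab with ⟨rfl, rfl⟩ | ⟨rfl, rfl⟩ | ⟨rfl, rfl⟩
      · rcases hbc with ⟨-, rfl⟩ | ⟨h, -⟩ | ⟨-, rfl⟩
        · -- (0,0,0)
          simp only [recon_cons, combine_zz, pos_cons_zero, ← List.map_append]
          exact IH.map _
        · exact CubeSym.noConfusion h
        · -- (0,0,1)
          simp only [recon_cons, combine_zz, combine_zo, pos_cons_zero, pos_cons_seg]
          refine List.Perm.trans List.perm_middle ?_
          rw [← List.map_append]
          exact (IH.map _).cons 0
      · rcases hbc with ⟨h, -⟩ | ⟨-, rfl⟩ | ⟨h, -⟩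
        · exact CubeSym.noConfusion h
        · -- (1,1,1)
          simp only [recon_cons, combine_oo, pos_cons_one, ← List.map_append]
          exact IH.map _
        · exact CubeSym.noConfusion h
      · rcases hbc with ⟨h, -⟩ | ⟨-, rfl⟩ | ⟨h, -⟩
        · exact CubeSym.noConfusion h
        · -- (0,1,1)
          simp only [recon_cons, combine_zo, combine_oo, pos_cons_seg, pos_cons_one,
            List.cons_append, ← List.map_append]
          exact (IH.map _).cons 0
        · exact CubeSym.noConfusion h

end CS
namespace CS
open CubeSym List

lemma inv_zero_head (l : List ℕ) : invCount (0 :: l) = invCount l := by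
  simp [List.countP_eq_zero]

lemma inv_shift_mid (X Y : List ℕ) :
    invCount (X.map (· + 1) ++ 0 :: Y.map (· + 1)) = X.length + invCount (X ++ Y) := by
  induction X with
  | nil => simp [inv_zero_head, invCount_map_succ]
  | cons a X ih =>
    simp only [List.map_cons, List.cons_append, invCount_cons, ih, List.countP_append,
      List.countP_cons, List.countP_map, List.length_cons]
    have h1 : ∀ Z : List ℕ, List.countP ((fun b => decide (b < a + 1)) ∘ (· + 1)) Z
        = List.countP (fun b => decide (b < a)) Z := by
      intro Z; apply List.countP_congr; intro b _; simp [Nat.add_lt_add_iff_right]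
    rw [h1, h1]
    simp
    omega

lemma inv_shift_both (X Y : List ℕ) :
    invCount (X.map (· + 1) ++ Y.map (· + 1)) = invCount (X ++ Y) := by
  rw [← List.map_append, invCount_map_succ]

lemma inv_seg_one (X Y : List ℕ) :
    invCount ((0 :: X.map (· + 1)) ++ Y.map (· + 1)) = invCount (X ++ Y) := by
  rw [List.cons_append, inv_zero_head, inv_shift_both]

/-- key chain lemma -/
lemma perm_key : ∀ (L' : List (List CubeSym)) (A Z : List CubeSym),
    (A :: L').getLast? = some Z →
    List.IsChain (fun F G => faceMax F = faceMin G) (A :: L') →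
    (((A :: L').map pos).flatten).Perm (pos (recon (faceMin A) (faceMax Z))) ∧
      lle (faceMin A) (faceMax Z) := by
  intro L'
  induction L' with
  | nil =>
    intro A Z hZ _
    simp only [List.getLast?_singleton, Option.some.injEq] at hZ
    subst hZ
    constructor
    · simp [recon_min_max]
    · exact lle_min_max A
  | cons C L'' ih =>
    intro A Z hZ hchain
    have hZ' : (C :: L'').getLast? = some Z := by
      rw [← hZ]; exact List.getLast?_cons_cons.symm
    rcases List.isChain_cons_cons.1 hchain with ⟨hAC, hchain'⟩
    rcases ih C Z hZ' hchain' with ⟨hperm, hle⟩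
    have hle1 : lle (faceMin A) (faceMax A) := lle_min_max A
    rw [hAC] at hle1
    refine ⟨?_, lle_trans hle1 hle⟩
    have : ((A :: C :: L'').map pos).flatten = pos A ++ ((C :: L'').map pos).flatten := by
      simp
    rw [this]
    refine ((hperm.append_left (pos A)).trans ?_)
    have h2 : pos A = pos (recon (faceMin A) (faceMin C)) := by
      rw [← hAC, recon_min_max]
    rw [h2]
    exact pos_recon_append hle1 hle

/-- Finsupp evaluation helpers -/
lemma fsum_apply_zero {α β : Type*} (f : α →₀ ℤ) (g : α → ℤ → β →₀ ℤ) (b : β)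
    (h : ∀ p c, g p c b = 0) : (f.sum g) b = 0 := by
  rw [Finsupp.sum_apply, Finsupp.sum]
  exact Finset.sum_eq_zero fun p _ => h p (f p)

lemma sum_sieve {α : Type*} [DecidableEq α] (f : α →₀ ℤ) (g : α → ℤ → ℤ) (a : α)
    (h0 : g a 0 = 0) :
    (f.sum fun p c => if p = a then g p c else 0) = g a (f a) := by
  rw [Finsupp.sum, Finset.sum_ite_eq' f.support a (fun p => g p (f p))]
  by_cases h : a ∈ f.support
  · rw [if_pos h]
  · rw [if_neg h, Finsupp.notMem_support_iff.1 h, h0]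

end CS
namespace CS
open CubeSym List

def copCond (F A B : List CubeSym) : Prop :=
  faceMin A = faceMin F ∧ faceMax B = faceMax F ∧ faceMax A = faceMin B

instance copCond.dec (F A B : List CubeSym) : Decidable (copCond F A B) := by
  unfold copCond; infer_instance

lemma fsum_zero {α : Type*} (f : α →₀ ℤ) (g : α → ℤ → ℤ) (h : ∀ p c, g p c = 0) :
    f.sum g = 0 := by
  rw [Finsupp.sum]; exact Finset.sum_eq_zero fun p _ => h p (f p)

lemma csCop_zero_eq (t : List CubeSym) : csCop (zero :: t) =
    (csCop t).sum fun p c => Finsupp.single (zero :: p.1, zero :: p.2) c := rfl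
lemma csCop_one_eq (t : List CubeSym) : csCop (one :: t) =
    (csCop t).sum fun p c => Finsupp.single (one :: p.1, one :: p.2) c := rfl
lemma csCop_seg_eq (t : List CubeSym) : csCop (seg :: t) =
    (csCop t).sum fun p c =>
        ((-1 : ℤ) ^ faceDeg p.1 * c) •
            Finsupp.single (zero :: p.1, seg :: p.2) (1 : ℤ) +
          c • Finsupp.single (seg :: p.1, one :: p.2) (1 : ℤ) := rfl

lemma cop_eval : ∀ (F A B : List CubeSym),
    csCop F (A, B) = if copCond F A B then (-1 : ℤ) ^ invCount (pos A ++ pos B) else 0 := by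
  intro F
  induction F with
  | nil =>
    intro A B
    rcases A with _ | ⟨a, A'⟩ <;> rcases B with _ | ⟨b, B'⟩ <;>
      simp [csCop, copCond, pos, segPositions, Finsupp.single_apply]
  | cons s t ih =>
    intro A B
    cases s
    case zero =>
      rw [csCop_zero_eq, Finsupp.sum_apply]
      rcases A with _ | ⟨a, A'⟩
      · rw [fsum_zero _ _ (fun p c => by simp [Finsupp.single_apply]),
          if_neg (by simp [copCond])]
      rcases B with _ | ⟨b, B'⟩
      · rw [fsum_zero _ _ (fun p c => by simp [Finsupp.single_apply]),
          if_neg (by simp [copCond])]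
      cases a <;> cases b
      case zero.zero =>
        have e1 : ((csCop t).sum fun p c =>
            (Finsupp.single (zero :: p.1, zero :: p.2) c :
              (List CubeSym × List CubeSym) →₀ ℤ) (zero :: A', zero :: B')) =
            (csCop t).sum fun p c => if p = (A', B') then c else 0 :=
          Finsupp.sum_congr fun p _ => by
            simp [Finsupp.single_apply, Prod.ext_iff]
        rw [e1, sum_sieve _ _ _ rfl, ih A' B', pos_cons_zero, pos_cons_zero, inv_shift_both]
        exact if_congr (by simp [copCond]) rfl rfl
      all_goals
        rw [fsum_zero _ _ (fun p c => by simp [Finsupp.single_apply]),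
          if_neg (by simp [copCond])]
    case one =>
      rw [csCop_one_eq, Finsupp.sum_apply]
      rcases A with _ | ⟨a, A'⟩
      · rw [fsum_zero _ _ (fun p c => by simp [Finsupp.single_apply]),
          if_neg (by simp [copCond])]
      rcases B with _ | ⟨b, B'⟩
      · rw [fsum_zero _ _ (fun p c => by simp [Finsupp.single_apply]),
          if_neg (by simp [copCond])]
      cases a <;> cases b
      case one.one =>
        have e1 : ((csCop t).sum fun p c =>
            (Finsupp.single (one :: p.1, one :: p.2) c :
              (List CubeSym × List CubeSym) →₀ ℤ) (one :: A', one :: B')) =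
            (csCop t).sum fun p c => if p = (A', B') then c else 0 :=
          Finsupp.sum_congr fun p _ => by
            simp [Finsupp.single_apply, Prod.ext_iff]
        rw [e1, sum_sieve _ _ _ rfl, ih A' B', pos_cons_one, pos_cons_one, inv_shift_both]
        exact if_congr (by simp [copCond]) rfl rfl
      all_goals
        rw [fsum_zero _ _ (fun p c => by simp [Finsupp.single_apply]),
          if_neg (by simp [copCond])]
    case seg =>
      rw [csCop_seg_eq, Finsupp.sum_apply]
      rcases A with _ | ⟨a, A'⟩
      · rw [fsum_zero _ _
            (fun p c => by simp [Finsupp.single_apply, Finsupp.smul_apply]),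
          if_neg (by simp [copCond])]
      rcases B with _ | ⟨b, B'⟩
      · rw [fsum_zero _ _
            (fun p c => by simp [Finsupp.single_apply, Finsupp.smul_apply]),
          if_neg (by simp [copCond])]
      cases a <;> cases b
      case zero.seg =>
        have e1 : ((csCop t).sum fun p c =>
            ((((-1 : ℤ) ^ faceDeg p.1 * c) •
              Finsupp.single (zero :: p.1, seg :: p.2) (1 : ℤ) +
              c • Finsupp.single (seg :: p.1, one :: p.2) (1 : ℤ)) :
              (List CubeSym × List CubeSym) →₀ ℤ) (zero :: A', seg :: B')) =
            (csCop t).sum fun p c =>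
              if p = (A', B') then (-1 : ℤ) ^ faceDeg p.1 * c else 0 :=
          Finsupp.sum_congr fun p _ => by
            have h2 : ((seg :: p.1, one :: p.2) : List CubeSym × List CubeSym)
                ≠ (zero :: A', seg :: B') := by simp
            rw [Finsupp.add_apply, Finsupp.smul_apply, Finsupp.smul_apply,
              Finsupp.single_apply, Finsupp.single_apply, if_neg h2, smul_zero, add_zero,
              smul_eq_mul]
            by_cases h : p = (A', B')
            · subst h; rw [if_pos rfl, if_pos rfl, mul_one]
            · rw [if_neg ?_, if_neg h, mul_zero]
              simp only [ne_eq, Prod.mk.injEq, List.cons.injEq, true_and]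
              exact fun hc => h (Prod.ext hc.1 hc.2)
        rw [e1, sum_sieve (csCop t) (fun p c => (-1 : ℤ) ^ faceDeg p.1 * c) (A', B')
          (mul_zero _), ih A' B', pos_cons_zero, pos_cons_seg,
          inv_shift_mid, mul_ite, mul_zero]
        refine if_congr (by simp [copCond]) ?_ rfl
        rw [faceDeg_eq_length_pos, pow_add]
      case seg.one =>
        have e1 : ((csCop t).sum fun p c =>
            ((((-1 : ℤ) ^ faceDeg p.1 * c) •
              Finsupp.single (zero :: p.1, seg :: p.2) (1 : ℤ) +
              c • Finsupp.single (seg :: p.1, one :: p.2) (1 : ℤ)) :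
              (List CubeSym × List CubeSym) →₀ ℤ) (seg :: A', one :: B')) =
            (csCop t).sum fun p c => if p = (A', B') then c else 0 :=
          Finsupp.sum_congr fun p _ => by
            simp [Finsupp.single_apply, Prod.ext_iff]
        rw [e1, sum_sieve _ _ _ rfl, ih A' B', pos_cons_seg, pos_cons_one, inv_seg_one]
        exact if_congr (by simp [copCond]) rfl rfl
      all_goals
        rw [fsum_zero _ _
            (fun p c => by simp [Finsupp.single_apply, Finsupp.smul_apply]),
          if_neg (by simp [copCond])]

end CS
namespace CS
open CubeSym List

def iterCond (F : List CubeSym) (k : ℕ) (L : List (List CubeSym)) : Prop :=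
  L.length = k + 1 ∧ (∀ G ∈ L.head?, faceMin G = faceMin F) ∧
    (∀ G ∈ L.getLast?, faceMax G = faceMax F) ∧
    List.IsChain (fun F G => faceMax F = faceMin G) L

instance iterCond.dec (F : List CubeSym) (k : ℕ) (L : List (List CubeSym)) :
    Decidable (iterCond F k L) := by
  unfold iterCond; infer_instance

lemma csIter_succ_eq (k : ℕ) (F : List CubeSym) : csIter (k + 1) F =
    (csCop F).sum fun p c =>
      c • ((csIter k p.2).sum fun L cc => Finsupp.single (p.1 :: L) cc) := rfl

lemma inner_eval (g : List (List CubeSym) →₀ ℤ) (x A : List CubeSym)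
    (L' : List (List CubeSym)) :
    (g.sum fun L'' cc => Finsupp.single (x :: L'') cc) (A :: L') =
      if x = A then g L' else 0 := by
  rw [Finsupp.sum_apply]
  by_cases h : x = A
  · subst h
    rw [if_pos rfl]
    have e : (g.sum fun L'' cc =>
        (Finsupp.single (x :: L'') cc : List (List CubeSym) →₀ ℤ) (x :: L')) =
        g.sum fun L'' cc => if L'' = L' then cc else 0 :=
      Finsupp.sum_congr fun L'' _ => by simp [Finsupp.single_apply]
    rw [e, sum_sieve _ (fun _ cc => cc) _ rfl]
  · rw [if_neg h, fsum_zero _ _ (fun L'' cc => by simp [Finsupp.single_apply, h])]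

lemma perm_of_iterCond {B0 : List CubeSym} {k : ℕ} {L' : List (List CubeSym)}
    (h : iterCond B0 k L') (hne : L' ≠ []) :
    ((L'.map pos).flatten).Perm (pos B0) := by
  rcases L' with _ | ⟨C, L''⟩
  · exact absurd rfl hne
  obtain ⟨-, hhead, hlast, hchain⟩ := h
  have hZ : (C :: L'').getLast? = some ((C :: L'').getLast (by simp)) :=
    List.getLast?_eq_getLast _
  obtain ⟨hperm, -⟩ := perm_key L'' C _ hZ hchain
  have h1 : faceMin C = faceMin B0 := hhead C rfl
  have h2 : faceMax ((C :: L'').getLast (by simp)) = faceMax B0 := hlast _ hZ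
  rw [h1, h2, recon_min_max] at hperm
  exact hperm

lemma cond_split (F A : List CubeSym) (k : ℕ) (L' : List (List CubeSym)) :
    iterCond F (k + 1) (A :: L') ↔
      copCond F A (recon (faceMax A) (faceMax F)) ∧
        iterCond (recon (faceMax A) (faceMax F)) k L' := by
  rcases L' with _ | ⟨C, L''⟩
  · constructor
    · rintro ⟨hlen, -⟩; simp at hlen
    · rintro ⟨-, hlen, -⟩; simp at hlen
  set B0 := recon (faceMax A) (faceMax F) with hB0
  constructor
  · rintro ⟨hlen, hhead, hlast, hchain⟩
    have hminA : faceMin A = faceMin F := hhead A rfl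
    have hlast' : ∀ G ∈ (C :: L'').getLast?, faceMax G = faceMax F := by
      intro G hG; exact hlast G (by rwa [List.getLast?_cons_cons])
    rcases List.isChain_cons_cons.1 hchain with ⟨hAC, hchain'⟩
    have hZ : (C :: L'').getLast? = some ((C :: L'').getLast (by simp)) :=
      List.getLast?_eq_getLast _
    obtain ⟨-, hle⟩ := perm_key L'' C _ hZ hchain'
    have hmaxZ : faceMax ((C :: L'').getLast (by simp)) = faceMax F := hlast' _ hZ
    rw [← hAC, hmaxZ] at hle
    have hminB0 : faceMin B0 = faceMax A := faceMin_recon hle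
    have hmaxB0 : faceMax B0 = faceMax F := faceMax_recon hle
    refine ⟨⟨hminA, hmaxB0, hminB0.symm⟩, ?_, ?_, ?_, hchain'⟩
    · simpa using hlen
    · intro G hG
      have : G = C := by simpa using hG.symm
      subst this
      rw [hminB0, hAC]
    · intro G hG; rw [hmaxB0]; exact hlast' G hG
  · rintro ⟨⟨hminA, hmaxB0, hAB0⟩, hlen, hhead, hlast, hchain⟩
    refine ⟨by simpa using hlen, ?_, ?_, ?_⟩
    · intro G hG
      have : G = A := by simpa using hG.symm
      subst this; exact hminA
    · intro G hG
      rw [List.getLast?_cons_cons] at hG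
      rw [hlast G hG, hmaxB0]
    · refine List.isChain_cons_cons.2 ⟨?_, hchain⟩
      rw [hAB0, ← hhead C rfl]

lemma iter_eval : ∀ (k : ℕ) (F : List CubeSym) (L : List (List CubeSym)),
    csIter k F L =
      if iterCond F k L then (-1 : ℤ) ^ invCount ((L.map pos).flatten) else 0 := by
  intro k
  induction k with
  | zero =>
    intro F L
    rcases L with _ | ⟨A, L'⟩
    · rw [show csIter 0 F = Finsupp.single [F] 1 from rfl, if_neg (by rintro ⟨h, -⟩; simp at h)]
      simp [Finsupp.single_apply]
    rcases L' with _ | ⟨C, L''⟩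
    · rw [show csIter 0 F = Finsupp.single [F] 1 from rfl]
      by_cases h : A = F
      · subst h
        rw [Finsupp.single_eq_same, if_pos ⟨rfl, by simp, by simp, List.isChain_singleton A⟩]
        rw [invCount_eq_zero_of_pairwise (by simpa using pos_pairwise A), pow_zero]
      · have hne2 : ([F] : List (List CubeSym)) ≠ [A] := by
          simp only [ne_eq, List.cons.injEq, and_true]
          exact fun he => h he.symm
        rw [Finsupp.single_apply, if_neg hne2, if_neg ?_]
        rintro ⟨-, hhead, hlast, -⟩
        exact h (minmax_ext (hhead A rfl) (hlast A rfl))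
    · rw [show csIter 0 F = Finsupp.single [F] 1 from rfl, Finsupp.single_apply,
        if_neg (by simp), if_neg (by rintro ⟨h, -⟩; simp at h)]
  | succ k ih =>
    intro F L
    rw [csIter_succ_eq, Finsupp.sum_apply]
    rcases L with _ | ⟨A, L'⟩
    · rw [fsum_zero _ _ (fun p c => by
        rw [Finsupp.smul_apply, Finsupp.sum_apply,
          fsum_zero _ _ (fun L'' cc => by simp [Finsupp.single_apply]), smul_zero]),
        if_neg (by rintro ⟨h, -⟩; simp at h)]
    set B0 := recon (faceMax A) (faceMax F) with hB0
    have e1 : ((csCop F).sum fun p c =>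
        (c • ((csIter k p.2).sum fun L'' cc =>
          Finsupp.single (p.1 :: L'') cc) : List (List CubeSym) →₀ ℤ) (A :: L')) =
        (csCop F).sum fun p c => if p = (A, B0) then c * csIter k p.2 L' else 0 := by
      refine Finsupp.sum_congr fun p hp => ?_
      obtain ⟨p1, p2⟩ := p
      rw [Finsupp.smul_apply, inner_eval, smul_eq_mul]
      by_cases h1 : p1 = A
      · by_cases h2 : p2 = B0
        · subst h1; subst h2
          rw [if_pos rfl, if_pos rfl]
        · -- p in support with p.1 = A forces p.2 = B0
          exfalso
          have hnz : csCop F (p1, p2) ≠ 0 := Finsupp.mem_support_iff.1 hp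
          rw [cop_eval] at hnz
          by_cases hcc : copCond F p1 p2
          · rcases hcc with ⟨-, hmax, hmin⟩
            exact h2 (by rw [← recon_min_max p2, ← hmin, hmax, h1])
          · rw [if_neg hcc] at hnz; exact hnz rfl
      · rw [if_neg h1, if_neg (by simp [Prod.ext_iff, h1]), mul_zero]
    rw [e1, sum_sieve (csCop F)
      (fun (p : List CubeSym × List CubeSym) (c : ℤ) => c * csIter k p.2 L') (A, B0)
      (zero_mul _)]
    simp only [cop_eval, ih]
    by_cases hc : copCond F A B0 ∧ iterCond B0 k L'
    · rw [if_pos hc.1, if_pos hc.2, if_pos ((cond_split F A k L').2 hc)]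
      have hne : L' ≠ [] := by
        rintro rfl; exact Nat.succ_ne_zero k hc.2.1.symm
      have hperm := perm_of_iterCond hc.2 hne
      rw [← pow_add]
      congr 1
      have hflat : (((A :: L').map pos).flatten) = pos A ++ (L'.map pos).flatten := by simp
      rw [hflat, invCount_append, invCount_append,
        invCount_eq_zero_of_pairwise (pos_pairwise B0), cross_perm (pos A) hperm]
      omega
    · rw [if_neg (fun ht => hc ((cond_split F A k L').1 ht))]
      rcases Decidable.not_and_iff_or_not.1 hc with h | h
      · rw [if_neg h, zero_mul]
      · rw [if_neg h, mul_zero]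

end CS
namespace CS
open CubeSym List

lemma chain_lengths : ∀ (L : List (List CubeSym)) (n : ℕ),
    List.IsChain (fun F G => faceMax F = faceMin G) L →
    (∀ G ∈ L.head?, G.length = n) → ∀ G ∈ L, G.length = n := by
  intro L
  induction L with
  | nil => intro n _ _ G hG; cases hG
  | cons A L ih =>
    intro n hchain hhead G hG
    rcases List.mem_cons.1 hG with rfl | hG
    · exact hhead G rfl
    · refine ih n hchain.tail ?_ G hG
      rcases L with _ | ⟨C, L'⟩
      · intro H hH; cases hH
      · intro H hH
        have hHC : H = C := by simpa using hH.symm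
        subst hHC
        have h1 : faceMax A = faceMin H := (List.isChain_cons_cons.1 hchain).1
        have h2 : A.length = n := hhead A rfl
        have : (faceMin H).length = (faceMax A).length := by rw [h1]
        rw [faceMin_length, faceMax_length] at this
        rw [this, h2]

end CS

/-- The `(k+1)`-fold iterated Cartan–Serre coproduct of the top face
`Iⁿ` is the signed sum of exactly those sequences of faces `F_1 | … | F_{k+1}` with
`min F_1 = 0ⁿ`, `max F_{k+1} = 1ⁿ` and `max F_i = min F_{i+1}`; the sign of the
coefficient of such a sequence is the sign of the permutation of `{0, …, n−1}` obtained
by concatenating the lists of `I`-positions of `F_1, F_2, …, F_{k+1}`. -/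
theorem csIter_top_face (n k : ℕ) (L : List (List CubeSym)) :
    (csIter k (List.replicate n CubeSym.seg)) L =
      if L.length = k + 1 ∧ (∀ F ∈ L, F.length = n) ∧
          (∀ F ∈ L.head?, faceMin F = List.replicate n CubeSym.zero) ∧
          (∀ F ∈ L.getLast?, faceMax F = List.replicate n CubeSym.one) ∧
          List.IsChain (fun F G => faceMax F = faceMin G) L then
        (-1 : ℤ) ^ invCount ((L.map fun F => segPositions F 0).flatten)
      else 0 := by
  rw [CS.iter_eval]
  have hmin : faceMin (List.replicate n CubeSym.seg) = List.replicate n CubeSym.zero := by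
    simp [faceMin]
  have hmax : faceMax (List.replicate n CubeSym.seg) = List.replicate n CubeSym.one := by
    simp [faceMax]
  have hiff : CS.iterCond (List.replicate n CubeSym.seg) k L ↔
      (L.length = k + 1 ∧ (∀ F ∈ L, F.length = n) ∧
        (∀ F ∈ L.head?, faceMin F = List.replicate n CubeSym.zero) ∧
        (∀ F ∈ L.getLast?, faceMax F = List.replicate n CubeSym.one) ∧
        List.IsChain (fun F G => faceMax F = faceMin G) L) := by
    constructor
    · rintro ⟨h1, h2, h3, h4⟩
      refine ⟨h1, ?_, fun G hG => (h2 G hG).trans hmin,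
        fun G hG => (h3 G hG).trans hmax, h4⟩
      apply CS.chain_lengths L n h4
      intro G hG
      have hh : faceMin G = List.replicate n CubeSym.zero := (h2 G hG).trans hmin
      have : (faceMin G).length = n := by rw [hh]; simp
      rwa [CS.faceMin_length] at this
    · rintro ⟨h1, -, h2, h3, h4⟩
      exact ⟨h1, fun G hG => (h2 G hG).trans hmin.symm,
        fun G hG => (h3 G hG).trans hmax.symm, h4⟩
  rw [if_congr hiff rfl rfl]
  rfl
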